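/- Let q ≥ 1 be an integer and A ≥ 0, σ ∈ (0,1]. Let Φ : ℝ^{d_u}×ℝ^{d_s} → ℝ^{d_s} be C^q in the second variable s, with the pointwise operator norm of the partial Jacobian ∂_s Φ bounded by σ everywhere, and with the norms of all iterated Fréchet derivatives in s of order between 2 and q bounded by A everywhere. Let γ : ℝ^{d_u} → ℝ^{d_u'} be any map and set Ψ(u,s) := (γ(u), Φ(u,s)). Let φ : ℝ^{d_u'}×ℝ^{d_s} → ℂ be C^q in its second variable y with all iterated derivatives in y up to order q bounded. Then there is a constant C depending only on q, d_s, and A (in particular independent of σ and φ) such that sup_{u,s} ‖D_s^q (φ∘Ψ)(u,s)‖ ≤ σ^q · sup_{u',y} ‖D_y^q φ(u',y)‖ + C · max_{1≤k≤q−1} sup_{u',y} ‖D_y^k φ(u',y)‖, where D_s^q and D_y^k denote iterated Fréchet derivatives in the indicated variables with multilinear-map norms. -/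

import Mathlib

open Set

/-- Norm bound for composing multilinear maps along an ordered finpartition. -/
lemma aux_norm_compAlong_le {𝕜 : Type*} [NontriviallyNormedField 𝕜]
    {E F G : Type*} [NormedAddCommGroup E] [NormedSpace 𝕜 E]
    [NormedAddCommGroup F] [NormedSpace 𝕜 F] [NormedAddCommGroup G] [NormedSpace 𝕜 G]
    {n : ℕ} (c : OrderedFinpartition n)
    (f : ContinuousMultilinearMap 𝕜 (fun _ : Fin c.length => F) G)
    (p : ∀ i : Fin c.length,
      ContinuousMultilinearMap 𝕜 (fun _ : Fin (c.partSize i) => E) F) :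
    ‖c.compAlongOrderedFinpartition f p‖ ≤ ‖f‖ * ∏ i, ‖p i‖ := by
  apply ContinuousMultilinearMap.opNorm_le_bound (by positivity) (fun v => ?_)
  simp only [OrderedFinpartition.compAlongOrderFinpartition_apply]
  apply (f.le_opNorm _).trans
  rw [mul_assoc, ← c.prod_sigma_eq_prod, ← Finset.prod_mul_distrib]
  gcongr with m _
  exact (p m).le_opNorm _

/-- The only ordered finpartition of `n` with `n` parts is the atomic one. -/
lemma aux_eq_atomic {n : ℕ} (c : OrderedFinpartition n) (h : c.length = n) :
    c = OrderedFinpartition.atomic n := by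
  have hsum : ∑ i, c.partSize i = n := by
    have := Fintype.card_congr c.equivSigma
    simpa [Fintype.card_sigma] using this
  have hps : ∀ i, c.partSize i = 1 := by
    intro i
    by_contra hi
    have h2 : 2 ≤ c.partSize i := by
      have := c.partSize_pos i
      omega
    have : ∑ j, (fun _ : Fin c.length => 1) j < ∑ j, c.partSize j := by
      apply Finset.sum_lt_sum (fun j _ => c.partSize_pos j) ⟨i, Finset.mem_univ i, by omega⟩
    simp only [Finset.sum_const, Finset.card_univ, Fintype.card_fin, smul_eq_mul,
      mul_one, hsum, h] at this
    omega
  rcases c with ⟨l, ps, pos, emb, hembmono, hparts, hdisj, hcov⟩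
  obtain rfl : l = n := h
  obtain rfl : ps = fun _ => 1 := funext hps
  have hembeq : (fun m => emb m ⟨1 - 1, Nat.sub_one_lt_of_lt (pos m)⟩) = id := by
    apply (StrictMono.range_inj hparts strictMono_id).mp
    rw [Set.range_id]
    exact (Finite.injective_iff_surjective.mp hparts.injective).range_eq
  obtain rfl : emb = fun m _ => m := by
    funext m j
    have hj : j = ⟨1 - 1, Nat.sub_one_lt_of_lt (pos m)⟩ := Subsingleton.elim _ _
    rw [hj]
    exact congrFun hembeq m
  rfl

/-- Key pointwise contraction estimate via the Faà di Bruno formula. -/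
lemma aux_key {E E' F : Type*} [NormedAddCommGroup E] [NormedSpace ℝ E]
    [NormedAddCommGroup E'] [NormedSpace ℝ E'] [NormedAddCommGroup F] [NormedSpace ℝ F]
    (q : ℕ) (hq : 1 ≤ q) (σ A Mq T : ℝ) (hσ0 : 0 ≤ σ) (hσ1 : σ ≤ 1) (hA : 0 ≤ A)
    (hMq : 0 ≤ Mq) (hT : 0 ≤ T)
    (f : E → E') (g : E' → F)
    (hf : ContDiff ℝ q f) (hg : ContDiff ℝ q g)
    (hf1 : ∀ s, ‖fderiv ℝ f s‖ ≤ σ)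
    (hfk : ∀ k, 2 ≤ k → k ≤ q → ∀ s, ‖iteratedFDeriv ℝ k f s‖ ≤ A)
    (hgq : ∀ y, ‖iteratedFDeriv ℝ q g y‖ ≤ Mq)
    (hgk : ∀ k, 1 ≤ k → k ≤ q - 1 → ∀ y, ‖iteratedFDeriv ℝ k g y‖ ≤ T)
    (s : E) :
    ‖iteratedFDeriv ℝ q (fun x => g (f x)) s‖ ≤
      σ ^ q * Mq + (Fintype.card (OrderedFinpartition q)) * (max 1 A) ^ q * T := by
  classical
  have Hf : HasFTaylorSeriesUpToOn q f (ftaylorSeriesWithin ℝ f univ) univ :=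
    hf.contDiffOn.ftaylorSeriesWithin uniqueDiffOn_univ
  have Hg : HasFTaylorSeriesUpToOn q g (ftaylorSeriesWithin ℝ g univ) univ :=
    hg.contDiffOn.ftaylorSeriesWithin uniqueDiffOn_univ
  have Hcomp := Hg.comp Hf (mapsTo_univ f univ)
  have heq := Hcomp.eq_iteratedFDerivWithin_of_uniqueDiffOn (m := q) le_rfl
    uniqueDiffOn_univ (mem_univ s)
  rw [iteratedFDerivWithin_univ] at heq
  have hcompeq : (fun x => g (f x)) = g ∘ f := rfl
  rw [hcompeq, ← heq]
  set p' := ftaylorSeriesWithin ℝ f univ s with hp'def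
  set q' := ftaylorSeriesWithin ℝ g univ (f s) with hq'def
  have hp' : ∀ k, p' k = iteratedFDeriv ℝ k f s := by
    intro k
    simp only [hp'def, ftaylorSeriesWithin, iteratedFDerivWithin_univ]
  have hq' : ∀ k, q' k = iteratedFDeriv ℝ k g (f s) := by
    intro k
    simp only [hq'def, ftaylorSeriesWithin, iteratedFDerivWithin_univ]
  have hp1 : ‖p' 1‖ ≤ σ := by
    rw [hp' 1]
    calc ‖iteratedFDeriv ℝ 1 f s‖ = ‖iteratedFDeriv ℝ 0 (fderiv ℝ f) s‖ :=
          (norm_iteratedFDeriv_fderiv (n := 0)).symm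
      _ = ‖fderiv ℝ f s‖ := norm_iteratedFDeriv_zero
      _ ≤ σ := hf1 s
  have hterm : ∀ c : OrderedFinpartition q, c ≠ OrderedFinpartition.atomic q →
      ‖q'.compAlongOrderedFinpartition p' c‖ ≤ (max 1 A) ^ q * T := by
    intro c hc
    have hl1 : 1 ≤ c.length := c.length_pos (by omega)
    have hlq : c.length < q :=
      lt_of_le_of_ne c.length_le (fun h => hc (aux_eq_atomic c h))
    have hlen : ‖q' c.length‖ ≤ T := by
      rw [hq' c.length]
      exact hgk c.length hl1 (by omega) (f s)
    have hprod : (∏ i, ‖p' (c.partSize i)‖) ≤ (max 1 A) ^ q := by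
      calc (∏ i, ‖p' (c.partSize i)‖) ≤ ∏ _i : Fin c.length, (max 1 A) := by
            apply Finset.prod_le_prod (fun i _ => norm_nonneg _)
            intro i _
            rcases eq_or_lt_of_le (show 1 ≤ c.partSize i from c.partSize_pos i) with h1 | h2
            · rw [← h1]
              exact le_trans hp1 (le_trans hσ1 (le_max_left 1 A))
            · refine le_trans ?_ (le_max_right 1 A)
              rw [hp' (c.partSize i)]
              exact hfk (c.partSize i) h2 (c.partSize_le i) s
        _ = (max 1 A) ^ c.length := by
            simp [Finset.prod_const]
        _ ≤ (max 1 A) ^ q :=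
            pow_le_pow_right₀ (le_max_left 1 A) c.length_le
    calc ‖q'.compAlongOrderedFinpartition p' c‖ ≤ ‖q' c.length‖ * ∏ i, ‖p' (c.partSize i)‖ :=
          aux_norm_compAlong_le c (q' c.length) (fun m => p' (c.partSize m))
      _ ≤ T * (max 1 A) ^ q := by
          apply mul_le_mul hlen hprod (Finset.prod_nonneg (fun i _ => norm_nonneg _)) hT
      _ = (max 1 A) ^ q * T := mul_comm _ _
  have hatomic : ‖q'.compAlongOrderedFinpartition p' (OrderedFinpartition.atomic q)‖ ≤
      σ ^ q * Mq := by
    refine le_trans (aux_norm_compAlong_le _ _ _) ?_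
    have h1 : ‖q' (OrderedFinpartition.atomic q).length‖ ≤ Mq := by
      rw [hq' (OrderedFinpartition.atomic q).length]
      exact hgq (f s)
    have h2 : (∏ i : Fin (OrderedFinpartition.atomic q).length,
        ‖p' ((OrderedFinpartition.atomic q).partSize i)‖) ≤ σ ^ q := by
      show (∏ _i : Fin q, ‖p' 1‖) ≤ σ ^ q
      rw [Finset.prod_const, Finset.card_univ, Fintype.card_fin]
      exact pow_le_pow_left₀ (norm_nonneg _) hp1 q
    calc ‖q' (OrderedFinpartition.atomic q).length‖ *
          ∏ i, ‖p' ((OrderedFinpartition.atomic q).partSize i)‖ ≤ Mq * σ ^ q := by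
          apply mul_le_mul h1 h2 (Finset.prod_nonneg (fun i _ => norm_nonneg _)) hMq
      _ = σ ^ q * Mq := mul_comm _ _
  show ‖(q'.taylorComp p') q‖ ≤ _
  have hsplit : (q'.taylorComp p') q =
      q'.compAlongOrderedFinpartition p' (OrderedFinpartition.atomic q) +
        ∑ c ∈ Finset.univ.erase (OrderedFinpartition.atomic q),
          q'.compAlongOrderedFinpartition p' c := by
    rw [FormalMultilinearSeries.taylorComp]
    exact (Finset.add_sum_erase _ _ (Finset.mem_univ _)).symm
  rw [hsplit]
  refine le_trans (norm_add_le _ _) (add_le_add hatomic ?_)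
  calc ‖∑ c ∈ Finset.univ.erase (OrderedFinpartition.atomic q),
        q'.compAlongOrderedFinpartition p' c‖ ≤
      ∑ c ∈ Finset.univ.erase (OrderedFinpartition.atomic q),
        ‖q'.compAlongOrderedFinpartition p' c‖ := norm_sum_le _ _
    _ ≤ ∑ _c ∈ Finset.univ.erase (OrderedFinpartition.atomic q), ((max 1 A) ^ q * T) := by
        apply Finset.sum_le_sum
        intro c hcmem
        exact hterm c (Finset.ne_of_mem_erase hcmem)
    _ = (Finset.univ.erase (OrderedFinpartition.atomic q)).card * ((max 1 A) ^ q * T) := by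
        rw [Finset.sum_const, nsmul_eq_mul]
    _ ≤ (Fintype.card (OrderedFinpartition q)) * ((max 1 A) ^ q * T) := by
        apply mul_le_mul_of_nonneg_right _ (by positivity)
        exact_mod_cast Nat.cast_le.mpr (le_trans (Finset.card_erase_le)
          (le_of_eq (Finset.card_univ)))
    _ = (Fintype.card (OrderedFinpartition q)) * (max 1 A) ^ q * T := by ring

/-- contraction estimate for the top-order derivative, in the contracted
direction, of the composition of a test function with a triangular map
`Ψ(u,s) = (γ(u), Φ(u,s))` whose second component contracts the `s`-direction with
factor `σ`. The constant `C` depends only on `q`, `dₛ` and `A`. -/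
theorem statement8 (q ds : ℕ) (hq : 1 ≤ q) (hds : 0 < ds) (A : ℝ) (hA : 0 ≤ A) :
    ∃ C : ℝ, ∀ (du du' : ℕ) (σ : ℝ), σ ∈ Set.Ioc (0 : ℝ) 1 →
      ∀ (Φ : EuclideanSpace ℝ (Fin du) × EuclideanSpace ℝ (Fin ds) →
          EuclideanSpace ℝ (Fin ds))
        (γ : EuclideanSpace ℝ (Fin du) → EuclideanSpace ℝ (Fin du'))
        (φ : EuclideanSpace ℝ (Fin du') × EuclideanSpace ℝ (Fin ds) → ℂ),
        (∀ u, ContDiff ℝ q fun s => Φ (u, s)) →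
        (∀ u s, ‖fderiv ℝ (fun s' => Φ (u, s')) s‖ ≤ σ) →
        (∀ k, 2 ≤ k → k ≤ q → ∀ u s,
          ‖iteratedFDeriv ℝ k (fun s' => Φ (u, s')) s‖ ≤ A) →
        (∀ u', ContDiff ℝ q fun y => φ (u', y)) →
        (∀ k ≤ q, ∃ D : ℝ, ∀ u' y,
          ‖iteratedFDeriv ℝ k (fun y' => φ (u', y')) y‖ ≤ D) →
        (⨆ u, ⨆ s, ‖iteratedFDeriv ℝ q (fun s' => φ (γ u, Φ (u, s'))) s‖) ≤
          σ ^ q * (⨆ u', ⨆ y, ‖iteratedFDeriv ℝ q (fun y' => φ (u', y')) y‖) +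
          C * ⨆ k ∈ Finset.Icc 1 (q - 1), ⨆ u', ⨆ y,
            ‖iteratedFDeriv ℝ k (fun y' => φ (u', y')) y‖ := by
  classical
  refine ⟨(Fintype.card (OrderedFinpartition q)) * (max 1 A) ^ q, ?_⟩
  intro du du' σ hσ Φ γ φ hΦ hΦ1 hΦk hφ hφbd
  obtain ⟨hσ0, hσ1⟩ := hσ
  have bdd : ∀ {α : Type} (f : α → ℝ) (B : ℝ), (∀ a, f a ≤ B) → BddAbove (Set.range f) := by
    intro α f B h
    exact ⟨B, by rintro x ⟨a, rfl⟩; exact h a⟩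
  set S : ℕ → ℝ := fun k => ⨆ u', ⨆ y, ‖iteratedFDeriv ℝ k (fun y' => φ (u', y')) y‖
    with hSdef
  -- pointwise bounds by the suprema S k, for k ≤ q
  have hS_le : ∀ k, k ≤ q → ∀ u' y,
      ‖iteratedFDeriv ℝ k (fun y' => φ (u', y')) y‖ ≤ S k := by
    intro k hk u' y
    obtain ⟨D, hD⟩ := hφbd k hk
    have hD0 : 0 ≤ D := le_trans (norm_nonneg _) (hD 0 0)
    have hinner : ∀ u'', (⨆ y, ‖iteratedFDeriv ℝ k (fun y' => φ (u'', y')) y‖) ≤ D :=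
      fun u'' => Real.iSup_le (hD u'') hD0
    exact le_trans (le_ciSup (bdd _ D (hD u')) y) (le_ciSup (bdd _ D hinner) u')
  have hS0 : ∀ k, k ≤ q → 0 ≤ S k := fun k hk => le_trans (norm_nonneg _) (hS_le k hk 0 0)
  -- the lower-order supremum T
  set T : ℝ := ⨆ k ∈ Finset.Icc 1 (q - 1), S k with hTdef
  set B : ℝ := ∑ j ∈ Finset.Icc 1 (q - 1), max 0 (S j) with hBdef
  have hB0 : 0 ≤ B := Finset.sum_nonneg (fun j _ => le_max_left 0 (S j))
  have hf_le : ∀ k : ℕ, (⨆ _ : k ∈ Finset.Icc 1 (q - 1), S k) ≤ B := by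
    intro k
    by_cases hk : k ∈ Finset.Icc 1 (q - 1)
    · rw [ciSup_pos hk]
      exact le_trans (le_max_right 0 (S k))
        (Finset.single_le_sum (fun j _ => le_max_left 0 (S j)) hk)
    · exact Real.iSup_le (fun h => absurd h hk) hB0
  have hbddT : BddAbove (Set.range fun k : ℕ => ⨆ _ : k ∈ Finset.Icc 1 (q - 1), S k) :=
    bdd _ B hf_le
  have hT0 : 0 ≤ T := by
    have h0 : (⨆ _ : (0 : ℕ) ∈ Finset.Icc 1 (q - 1), S 0) = 0 := by
      have hne : ¬ ((0 : ℕ) ∈ Finset.Icc 1 (q - 1)) := by simp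
      haveI : IsEmpty ((0 : ℕ) ∈ Finset.Icc 1 (q - 1)) := isEmpty_Prop.mpr hne
      exact Real.iSup_of_isEmpty _
    calc (0 : ℝ) = ⨆ _ : (0 : ℕ) ∈ Finset.Icc 1 (q - 1), S 0 := h0.symm
      _ ≤ T := le_ciSup hbddT 0
  have hTk : ∀ k, 1 ≤ k → k ≤ q - 1 → ∀ u' y,
      ‖iteratedFDeriv ℝ k (fun y' => φ (u', y')) y‖ ≤ T := by
    intro k hk1 hk2 u' y
    have hkq : k ≤ q := by omega
    have hkmem : k ∈ Finset.Icc 1 (q - 1) := Finset.mem_Icc.mpr ⟨hk1, hk2⟩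
    have h1 : (⨆ _ : k ∈ Finset.Icc 1 (q - 1), S k) = S k := ciSup_pos hkmem
    calc ‖iteratedFDeriv ℝ k (fun y' => φ (u', y')) y‖ ≤ S k := hS_le k hkq u' y
      _ = ⨆ _ : k ∈ Finset.Icc 1 (q - 1), S k := h1.symm
      _ ≤ T := le_ciSup hbddT k
  -- conclude
  have hRHS0 : 0 ≤ σ ^ q * S q +
      (Fintype.card (OrderedFinpartition q)) * (max 1 A) ^ q * T := by
    have h1 : (0 : ℝ) ≤ σ ^ q * S q :=
      mul_nonneg (pow_nonneg (le_of_lt hσ0) q) (hS0 q le_rfl)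
    have h2 : (0 : ℝ) ≤ (Fintype.card (OrderedFinpartition q) : ℝ) * (max 1 A) ^ q * T := by
      apply mul_nonneg _ hT0
      positivity
    linarith
  apply Real.iSup_le _ hRHS0
  intro u
  apply Real.iSup_le _ hRHS0
  intro s
  exact aux_key q hq σ A (S q) T (le_of_lt hσ0) hσ1 hA (hS0 q le_rfl) hT0
    (fun s => Φ (u, s)) (fun y => φ (γ u, y)) (hΦ u) (hφ (γ u)) (hΦ1 u)
    (fun k h2 hkq s => hΦk k h2 hkq u s) (fun y => hS_le q le_rfl (γ u) y)
    (fun k hk1 hk2 y => hTk k hk1 hk2 (γ u) y) s
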